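/- In the continuous homogeneous setting, if there exists d > 0 and a cache state S = {y_1,…,y_k} such that the balls B_d(y_h), h = 1,…,k, tessellate X (their union is X and pairwise intersections have measure zero), then S minimizes the expected cost 𝒞(S) = λ∫_X min_{y∈S} c(x − y) dx over all sets of k points in X. -/

import Mathlib

open MeasureTheory Metric Pointwise
open scoped ENNReal

/-- Corollary 2: In the continuous homogeneous setting, if for some `d > 0`
the balls `B_d(y_h)`, `h = 1,…,k`, tessellate `X` (their union is `X` and pairwise
intersections have measure zero), then the cache state `S = {y_1,…,y_k}` minimizes the
expected cost `𝒞(S) = λ ∫_X min_{y∈S} c (x - y) dx` over all sets of `k` points in `X`. -/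
theorem stmt4 {E : Type*} [NormedAddCommGroup E] [NormedSpace ℝ E]
    [MeasurableSpace E] [BorelSpace E] [FiniteDimensional ℝ E]
    (μ : Measure E) [μ.IsAddHaarMeasure]
    (h : ℝ → ℝ) (hmono : Monotone h) (hnonneg : ∀ d, 0 ≤ h d)
    (Cr : ℝ) (hCr : 0 < Cr)
    (X : Set E) (hX : IsCompact X)
    (lam : ℝ) (hlam : 0 < lam)
    (k : ℕ) (hk : 0 < k)
    (S : Fin k → E) (hS : ∀ i, S i ∈ X)
    (d : ℝ) (hd : 0 < d)
    (hcover : (⋃ i : Fin k, closedBall (S i) d) = X)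
    (hdisj : ∀ i j : Fin k, i ≠ j →
      μ (closedBall (S i) d ∩ closedBall (S j) d) = 0) :
    ∀ S' : Fin k → E, (∀ i, S' i ∈ X) →
      lam * ∫ x in X, ⨅ i : Fin k, min (h ‖x - S i‖) Cr ∂μ ≤
        lam * ∫ x in X, ⨅ i : Fin k, min (h ‖x - S' i‖) Cr ∂μ := by
  intro S' hS'
  have hkne : Nonempty (Fin k) := ⟨⟨0, hk⟩⟩
  set c : E → ℝ := fun z => min (h ‖z‖) Cr with hc
  have hcmeas : Measurable c := (hmono.measurable.comp measurable_norm).min measurable_const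
  have hcnn : ∀ z, 0 ≤ c z := fun z => le_min (hnonneg _) hCr.le
  have hcle : ∀ z, c z ≤ Cr := fun z => min_le_right _ _
  have hcmono : ∀ {z w : E}, ‖z‖ ≤ ‖w‖ → c z ≤ c w :=
    fun hzw => min_le_min (hmono hzw) le_rfl
  set f : E → ℝ := fun x => ⨅ i : Fin k, c (x - S i) with hf
  set g : E → ℝ := fun x => ⨅ i : Fin k, c (x - S' i) with hg
  have hfm : Measurable f :=
    Measurable.iInf fun i => hcmeas.comp (measurable_id.sub_const (S i))
  have hgm : Measurable g :=
    Measurable.iInf fun i => hcmeas.comp (measurable_id.sub_const (S' i))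
  have hbdd : ∀ (y : Fin k → E) (x : E), BddBelow (Set.range fun i => c (x - y i)) :=
    fun y x => Set.Finite.bddBelow (Set.finite_range _)
  have hfnn : ∀ x, 0 ≤ f x := fun x => le_ciInf fun i => hcnn _
  have hgnn : ∀ x, 0 ≤ g x := fun x => le_ciInf fun i => hcnn _
  have hfle : ∀ x, f x ≤ Cr := fun x =>
    le_trans (ciInf_le (hbdd S x) (Classical.arbitrary (Fin k))) (hcle _)
  have hgle : ∀ x, g x ≤ Cr := fun x =>
    le_trans (ciInf_le (hbdd S' x) (Classical.arbitrary (Fin k))) (hcle _)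
  have hXm : MeasurableSet X := hX.isClosed.measurableSet
  have hXfin : μ X < ⊤ := hX.measure_lt_top
  set B : Set E := closedBall (0 : E) d with hB
  -- translate of closed balls
  have hball : ∀ y : E, (y +ᵥ B) = closedBall y d := by
    intro y; simp [hB, vadd_closedBall]
  -- μ X = k * μ B
  have hXeq : μ X = (k : ℝ≥0∞) * μ B := by
    rw [← hcover]
    rw [measure_iUnion₀ (fun i j hij => hdisj i j hij)
        (fun i => measurableSet_closedBall.nullMeasurableSet)]
    have : ∀ i : Fin k, μ (closedBall (S i) d) = μ B := by
      intro i; rw [← hball (S i), measure_vadd μ (S i) B]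
    simp_rw [this, tsum_fintype, Finset.sum_const, Finset.card_univ, Fintype.card_fin,
      nsmul_eq_mul]
  -- sublevel sets
  have key : ∀ t : ℝ, μ ({x | g x ≤ t} ∩ X) ≤ μ ({x | f x ≤ t} ∩ X) := by
    intro t
    set A : Set E := {z | c z ≤ t} with hA
    have hAm : MeasurableSet A := hcmeas measurableSet_Iic
    have hmemvadd : ∀ (a x : E) (s : Set E), x ∈ a +ᵥ s ↔ x - a ∈ s := by
      intro a x s
      rw [Set.mem_vadd_set_iff_neg_vadd_mem]; simp [vadd_eq_add, neg_add_eq_sub]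
    -- upper bound on g-sublevel
    have h1 : μ ({x | g x ≤ t} ∩ X) ≤ (k : ℝ≥0∞) * μ A := by
      have hsub : {x | g x ≤ t} ∩ X ⊆ ⋃ i : Fin k, (S' i +ᵥ A) := by
        rintro x ⟨hx, -⟩
        obtain ⟨i, hi⟩ := exists_eq_ciInf_of_finite (f := fun i : Fin k => c (x - S' i))
        refine Set.mem_iUnion.2 ⟨i, ?_⟩
        rw [hmemvadd]
        exact le_trans (le_of_eq hi) hx
      calc μ ({x | g x ≤ t} ∩ X) ≤ μ (⋃ i : Fin k, (S' i +ᵥ A)) := measure_mono hsub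
        _ ≤ ∑' i : Fin k, μ (S' i +ᵥ A) := measure_iUnion_le _
        _ = (k : ℝ≥0∞) * μ A := by
            have : ∀ i : Fin k, μ (S' i +ᵥ A) = μ A := fun i => measure_vadd μ (S' i) A
            simp_rw [this, tsum_fintype, Finset.sum_const, Finset.card_univ,
              Fintype.card_fin, nsmul_eq_mul]
      -- lower bound on f-sublevel
    have h2 : (k : ℝ≥0∞) * μ (A ∩ B) ≤ μ ({x | f x ≤ t} ∩ X) := by
      have hsubball : ∀ i : Fin k, (S i +ᵥ (A ∩ B)) ⊆ closedBall (S i) d := by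
        intro i x hx
        rw [hmemvadd] at hx
        rw [mem_closedBall, dist_eq_norm]
        simpa [hB] using hx.2
      have hsub : (⋃ i : Fin k, (S i +ᵥ (A ∩ B))) ⊆ {x | f x ≤ t} ∩ X := by
        intro x hx
        obtain ⟨i, hi⟩ := Set.mem_iUnion.1 hx
        constructor
        · have hxA : x - S i ∈ A := ((hmemvadd _ _ _).1 hi).1
          exact le_trans (ciInf_le (hbdd S x) i) hxA
        · rw [← hcover]
          exact Set.mem_iUnion.2 ⟨i, hsubball i hi⟩
      have hdisj' : Pairwise (Function.onFun (AEDisjoint μ) fun i : Fin k => S i +ᵥ (A ∩ B)) := by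
        intro i j hij
        exact measure_mono_null
          (Set.inter_subset_inter (hsubball i) (hsubball j)) (hdisj i j hij)
      have heq : μ (⋃ i : Fin k, (S i +ᵥ (A ∩ B))) = (k : ℝ≥0∞) * μ (A ∩ B) := by
        rw [measure_iUnion₀ hdisj'
            (fun i => ((hAm.inter measurableSet_closedBall).const_vadd (S i)).nullMeasurableSet)]
        have : ∀ i : Fin k, μ (S i +ᵥ (A ∩ B)) = μ (A ∩ B) :=
          fun i => measure_vadd μ (S i) (A ∩ B)
        simp_rw [this, tsum_fintype, Finset.sum_const, Finset.card_univ,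
          Fintype.card_fin, nsmul_eq_mul]
      rw [← heq]
      exact measure_mono hsub
    -- case split on A vs B
    by_cases hAB : A ⊆ B
    · have : A ∩ B = A := Set.inter_eq_self_of_subset_left hAB
      rw [this] at h2
      exact le_trans h1 h2
    · have hBA : B ⊆ A := by
        obtain ⟨z0, hz0A, hz0B⟩ := Set.not_subset.1 hAB
        intro z hz
        have hz0n : d < ‖z0‖ := by
          by_contra hcon
          exact hz0B (by simpa [hB] using not_lt.1 hcon)
        have hzn : ‖z‖ ≤ ‖z0‖ := le_trans (by simpa [hB] using hz) hz0n.le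
        exact le_trans (hcmono hzn) hz0A
      have : A ∩ B = B := Set.inter_eq_self_of_subset_right hBA
      rw [this] at h2
      calc μ ({x | g x ≤ t} ∩ X) ≤ μ X := measure_mono Set.inter_subset_right
        _ = (k : ℝ≥0∞) * μ B := hXeq
        _ ≤ μ ({x | f x ≤ t} ∩ X) := h2
  -- superlevel sets for the restricted measure
  set ν : Measure E := μ.restrict X with hν
  have hνuniv : ν Set.univ = μ X := by rw [hν, Measure.restrict_apply_univ]
  have hνfin : ∀ s : Set E, ν s < ⊤ := fun s =>
    lt_of_le_of_lt (le_trans (measure_mono (Set.subset_univ s)) (le_of_eq hνuniv)) hXfin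
  have hlt : ∀ t : ℝ, ν {x | t < f x} ≤ ν {x | t < g x} := by
    intro t
    have hfs : MeasurableSet {x | f x ≤ t} := hfm measurableSet_Iic
    have hgs : MeasurableSet {x | g x ≤ t} := hgm measurableSet_Iic
    have hcf : {x | t < f x} = {x | f x ≤ t}ᶜ := by ext x; simp [not_le]
    have hcg : {x | t < g x} = {x | g x ≤ t}ᶜ := by ext x; simp [not_le]
    rw [hcf, hcg, measure_compl hfs (hνfin _).ne, measure_compl hgs (hνfin _).ne]
    apply tsub_le_tsub_left
    rw [hν, Measure.restrict_apply hgs, Measure.restrict_apply hfs]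
    exact key t
  -- layer cake
  have L1 : ∫⁻ x, ENNReal.ofReal (f x) ∂ν = ∫⁻ t in Set.Ioi 0, ν {a | t < f a} :=
    lintegral_eq_lintegral_meas_lt ν (Filter.Eventually.of_forall hfnn) hfm.aemeasurable
  have L2 : ∫⁻ x, ENNReal.ofReal (g x) ∂ν = ∫⁻ t in Set.Ioi 0, ν {a | t < g a} :=
    lintegral_eq_lintegral_meas_lt ν (Filter.Eventually.of_forall hgnn) hgm.aemeasurable
  have hlint : ∫⁻ x, ENNReal.ofReal (f x) ∂ν ≤ ∫⁻ x, ENNReal.ofReal (g x) ∂ν := by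
    rw [L1, L2]
    exact lintegral_mono fun t => hlt t
  have hgfin : ∫⁻ x, ENNReal.ofReal (g x) ∂ν < ⊤ := by
    calc ∫⁻ x, ENNReal.ofReal (g x) ∂ν ≤ ∫⁻ _, ENNReal.ofReal Cr ∂ν :=
          lintegral_mono fun x => ENNReal.ofReal_le_ofReal (hgle x)
      _ = ENNReal.ofReal Cr * ν Set.univ := lintegral_const _
      _ < ⊤ := ENNReal.mul_lt_top ENNReal.ofReal_lt_top (hνuniv ▸ hXfin)
  have hIF : ∫ x in X, f x ∂μ = (∫⁻ x, ENNReal.ofReal (f x) ∂ν).toReal := by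
    rw [hν]
    exact integral_eq_lintegral_of_nonneg_ae (Filter.Eventually.of_forall hfnn)
      hfm.aestronglyMeasurable
  have hIG : ∫ x in X, g x ∂μ = (∫⁻ x, ENNReal.ofReal (g x) ∂ν).toReal := by
    rw [hν]
    exact integral_eq_lintegral_of_nonneg_ae (Filter.Eventually.of_forall hgnn)
      hgm.aestronglyMeasurable
  have hmain : ∫ x in X, f x ∂μ ≤ ∫ x in X, g x ∂μ := by
    rw [hIF, hIG]
    exact ENNReal.toReal_mono hgfin.ne hlint
  exact mul_le_mul_of_nonneg_left hmain hlam.le
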